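/- For every integer n ≥ 2 there exists a constant c₁ = c₁(n), depending only on n, such that cp(D) ≤ c₁ for every weakly connected T_n-free digraph D whose underlying graph G_D is {K_{1,n}, P_n}-free. -/

import Mathlib

/-! ## Basic notions for graphs and digraphs

A digraph on a vertex type `V` is given by its arc relation `E : V → V → Prop`.
Simplicity and absence of 2-cycles is expressed by the hypothesis
`∀ u v, E u v → ¬ E v u`.  The underlying graph `G_D` is `SimpleGraph.fromRel E`. -/

/-- `G` contains an induced copy of the simple graph `H`. -/
def HasInducedCopyG {W V : Type} (H : SimpleGraph W) (G : SimpleGraph V) : Prop :=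
  ∃ f : W → V, Function.Injective f ∧ ∀ a b : W, G.Adj (f a) (f b) ↔ H.Adj a b

/-- The digraph `E` contains an induced copy of the digraph `H`. -/
def DigraphHasInducedCopy {W V : Type} (H : W → W → Prop) (E : V → V → Prop) : Prop :=
  ∃ f : W → V, Function.Injective f ∧ ∀ a b : W, E (f a) (f b) ↔ H a b

/-- The star `K_{1,n}` with one center and `n` leaves. -/
def StarG (n : ℕ) : SimpleGraph (Unit ⊕ Fin n) :=
  SimpleGraph.fromRel (fun a b =>
    match a, b with
    | Sum.inl _, Sum.inr _ => True
    | _, _ => False)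

/-- The path `P_n` of order `n`. -/
def PathG (n : ℕ) : SimpleGraph (Fin n) :=
  SimpleGraph.fromRel (fun i j => i.val + 1 = j.val)

/-- The graph `K*_n`: a complete graph on the `x_i` together with pendant edges `x_i y_i`. -/
def KStarG (n : ℕ) : SimpleGraph (Fin n ⊕ Fin n) :=
  SimpleGraph.fromRel (fun a b =>
    match a, b with
    | Sum.inl i, Sum.inl j => i ≠ j
    | Sum.inl i, Sum.inr j => i = j
    | _, _ => False)

/-- The graph `F^(1)_n` on `{x₁,x₂} ∪ {yᵢ} ∪ {zᵢ}`:
edges `x₁x₂, x₁y₁, x₁z₁` together with the two paths `y₁⋯y_n` and `z₁⋯z_n`. -/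
def F1G (n : ℕ) : SimpleGraph (Fin 2 ⊕ Fin n ⊕ Fin n) :=
  SimpleGraph.fromRel (fun a b =>
    match a, b with
    | Sum.inl i, Sum.inl j => i.val = 0 ∧ j.val = 1
    | Sum.inl i, Sum.inr (Sum.inl j) => i.val = 0 ∧ j.val = 0
    | Sum.inl i, Sum.inr (Sum.inr j) => i.val = 0 ∧ j.val = 0
    | Sum.inr (Sum.inl i), Sum.inr (Sum.inl j) => i.val + 1 = j.val
    | Sum.inr (Sum.inr i), Sum.inr (Sum.inr j) => i.val + 1 = j.val
    | _, _ => False)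

/-- The single edge `y₁z₁` (used to build `F^(2)_n` and `F^(4)_n`). -/
def YZEdgeG (n : ℕ) : SimpleGraph (Fin 2 ⊕ Fin n ⊕ Fin n) :=
  SimpleGraph.fromRel (fun a b =>
    match a, b with
    | Sum.inr (Sum.inl i), Sum.inr (Sum.inr j) => i.val = 0 ∧ j.val = 0
    | _, _ => False)

/-- `F^(2)_n = F^(1)_n + y₁z₁`. -/
def F2G (n : ℕ) : SimpleGraph (Fin 2 ⊕ Fin n ⊕ Fin n) := F1G n ⊔ YZEdgeG n

/-- The graph `F^(3)_n`: edges `x₁y₁, x₁z₁, x₂y₁, x₂z₁` together with the two paths. -/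
def F3G (n : ℕ) : SimpleGraph (Fin 2 ⊕ Fin n ⊕ Fin n) :=
  SimpleGraph.fromRel (fun a b =>
    match a, b with
    | Sum.inl _, Sum.inr (Sum.inl j) => j.val = 0
    | Sum.inl _, Sum.inr (Sum.inr j) => j.val = 0
    | Sum.inr (Sum.inl i), Sum.inr (Sum.inl j) => i.val + 1 = j.val
    | Sum.inr (Sum.inr i), Sum.inr (Sum.inr j) => i.val + 1 = j.val
    | _, _ => False)

/-- `F^(4)_n = F^(3)_n + y₁z₁`. -/
def F4G (n : ℕ) : SimpleGraph (Fin 2 ⊕ Fin n ⊕ Fin n) := F3G n ⊔ YZEdgeG n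

/-- The digraph `D^(1)_n` on `{x₁} ∪ {yᵢ} ∪ {zᵢ}` with arcs
`(x₁,y₁), (z₁,x₁), (y₁,z₁)`, `(y_{i+1}, y_i)` and `(z_i, z_{i+1})`. -/
def D1Rel (n : ℕ) : (Unit ⊕ Fin n ⊕ Fin n) → (Unit ⊕ Fin n ⊕ Fin n) → Prop := fun a b =>
  match a, b with
  | Sum.inl _, Sum.inr (Sum.inl j) => j.val = 0
  | Sum.inr (Sum.inr i), Sum.inl _ => i.val = 0
  | Sum.inr (Sum.inl i), Sum.inr (Sum.inr j) => i.val = 0 ∧ j.val = 0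
  | Sum.inr (Sum.inl i), Sum.inr (Sum.inl j) => j.val + 1 = i.val
  | Sum.inr (Sum.inr i), Sum.inr (Sum.inr j) => i.val + 1 = j.val
  | _, _ => False

/-- `D^(2)_n`: obtained from `D^(1)_n` by replacing the arc `(z₁,x₁)` by `(x₁,z₁)`. -/
def D2Rel (n : ℕ) : (Unit ⊕ Fin n ⊕ Fin n) → (Unit ⊕ Fin n ⊕ Fin n) → Prop := fun a b =>
  match a, b with
  | Sum.inl _, Sum.inr (Sum.inl j) => j.val = 0
  | Sum.inl _, Sum.inr (Sum.inr j) => j.val = 0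
  | Sum.inr (Sum.inl i), Sum.inr (Sum.inr j) => i.val = 0 ∧ j.val = 0
  | Sum.inr (Sum.inl i), Sum.inr (Sum.inl j) => j.val + 1 = i.val
  | Sum.inr (Sum.inr i), Sum.inr (Sum.inr j) => i.val + 1 = j.val
  | _, _ => False

/-- `D^(3)_n`: obtained from `D^(1)_n` by replacing the arc `(x₁,y₁)` by `(y₁,x₁)`. -/
def D3Rel (n : ℕ) : (Unit ⊕ Fin n ⊕ Fin n) → (Unit ⊕ Fin n ⊕ Fin n) → Prop := fun a b =>
  match a, b with
  | Sum.inr (Sum.inl i), Sum.inl _ => i.val = 0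
  | Sum.inr (Sum.inr i), Sum.inl _ => i.val = 0
  | Sum.inr (Sum.inl i), Sum.inr (Sum.inr j) => i.val = 0 ∧ j.val = 0
  | Sum.inr (Sum.inl i), Sum.inr (Sum.inl j) => j.val + 1 = i.val
  | Sum.inr (Sum.inr i), Sum.inr (Sum.inr j) => i.val + 1 = j.val
  | _, _ => False

/-- The transitive tournament `T_n`. -/
def TRel (n : ℕ) : Fin n → Fin n → Prop := fun i j => i < j

/-- A (nonempty) directed path in the digraph `E`, recorded as its list of vertices. -/
def IsDirPathList {V : Type} (E : V → V → Prop) (l : List V) : Prop :=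
  l ≠ [] ∧ l.Nodup ∧ l.Chain' E

/-- The path cover number of the subdigraph of `E` induced by `X`:
the minimum number of directed paths of `E[X]` whose vertex sets cover `X`. -/
noncomputable def pcOn {V : Type} (E : V → V → Prop) (X : Set V) : ℕ :=
  sInf {k | ∃ P : Finset (List V), P.card = k ∧
    (∀ l ∈ P, IsDirPathList E l ∧ ∀ v ∈ l, v ∈ X) ∧
    ∀ v ∈ X, ∃ l ∈ P, v ∈ l}

/-- The path partition number of the subdigraph of `E` induced by `X`:
the minimum number of pairwise vertex-disjoint directed paths of `E[X]`
whose vertex sets partition `X`. -/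
noncomputable def ppOn {V : Type} (E : V → V → Prop) (X : Set V) : ℕ :=
  sInf {k | ∃ P : Finset (List V), P.card = k ∧
    (∀ l ∈ P, IsDirPathList E l ∧ ∀ v ∈ l, v ∈ X) ∧
    (∀ v ∈ X, ∃ l ∈ P, v ∈ l) ∧
    ∀ l ∈ P, ∀ l' ∈ P, l ≠ l' → ∀ v ∈ l, v ∉ l'}

/-- A (nonempty) path in the simple graph `G`, recorded as its list of vertices. -/
def IsPathList {V : Type} (G : SimpleGraph V) (l : List V) : Prop :=
  l ≠ [] ∧ l.Nodup ∧ l.Chain' G.Adj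

/-- The path cover number `pc(G)` of a simple graph `G`. -/
noncomputable def pcG {V : Type} (G : SimpleGraph V) : ℕ :=
  sInf {k | ∃ P : Finset (List V), P.card = k ∧
    (∀ l ∈ P, IsPathList G l) ∧ ∀ v : V, ∃ l ∈ P, v ∈ l}

/-- The path partition number `pp(G)` of a simple graph `G`. -/
noncomputable def ppG {V : Type} (G : SimpleGraph V) : ℕ :=
  sInf {k | ∃ P : Finset (List V), P.card = k ∧
    (∀ l ∈ P, IsPathList G l) ∧ (∀ v : V, ∃ l ∈ P, v ∈ l) ∧
    ∀ l ∈ P, ∀ l' ∈ P, l ≠ l' → ∀ v ∈ l, v ∉ l'}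

/-- A directed cycle in the digraph `E`, recorded as its list of vertices. -/
def IsDirCycleList {V : Type} (E : V → V → Prop) (l : List V) : Prop :=
  ∃ h : l ≠ [], 3 ≤ l.length ∧ l.Nodup ∧ l.Chain' E ∧ E (l.getLast h) (l.head h)

/-- A member of a cycle cover/partition: a directed cycle, or a weakly connected
subdigraph of order at most two. -/
def IsCyclePartMember {V : Type} (E : V → V → Prop) (l : List V) : Prop :=
  IsDirCycleList E l ∨
    (l ≠ [] ∧ l.length ≤ 2 ∧ l.Nodup ∧ l.Chain' (fun a b => E a b ∨ E b a))

/-- The cycle partition number `cp(D)` of the digraph `E`. -/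
noncomputable def cpNum {V : Type} (E : V → V → Prop) : ℕ :=
  sInf {k | ∃ P : Finset (List V), P.card = k ∧
    (∀ l ∈ P, IsCyclePartMember E l) ∧
    (∀ v : V, ∃ l ∈ P, v ∈ l) ∧
    ∀ l ∈ P, ∀ l' ∈ P, l ≠ l' → ∀ v ∈ l, v ∉ l'}

/-- `v : Fin m → V` enumerates an induced path of the simple graph `G`. -/
def IsInducedPathEmb {V : Type} (G : SimpleGraph V) {m : ℕ} (v : Fin m → V) : Prop :=
  Function.Injective v ∧
    ∀ i j : Fin m, G.Adj (v i) (v j) ↔ (i.val + 1 = j.val ∨ j.val + 1 = i.val)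

/-- `w : Fin m → V` enumerates an induced pseudo-path of the digraph `E`:
the induced subdigraph on its image has a path as underlying graph. -/
def IsInducedPsPath {V : Type} (E : V → V → Prop) {m : ℕ} (w : Fin m → V) : Prop :=
  Function.Injective w ∧
    ∀ i j : Fin m, (E (w i) (w j) ∨ E (w j) (w i)) ↔ (i.val + 1 = j.val ∨ j.val + 1 = i.val)

/-- `r(P)` for a pseudo-path enumerated by `w`: the number of (internal) vertices
having out-degree 2 or in-degree 2 in the pseudo-path. -/
noncomputable def turnCount {V : Type} (E : V → V → Prop) {m : ℕ} (w : Fin m → V) : ℕ :=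
  Set.ncard {i : Fin m | ∃ j k : Fin m, j.val + 1 = i.val ∧ i.val + 1 = k.val ∧
    ((E (w i) (w j) ∧ E (w i) (w k)) ∨ (E (w j) (w i) ∧ E (w k) (w i)))}

/-- Condition (D1): the underlying graph of `E` is `{K*_n, K_{1,n}, F^(1)_n, F^(2)_n}`-free. -/
def CondD1 {V : Type} (n : ℕ) (E : V → V → Prop) : Prop :=
  ¬ HasInducedCopyG (KStarG n) (SimpleGraph.fromRel E) ∧
  ¬ HasInducedCopyG (StarG n) (SimpleGraph.fromRel E) ∧
  ¬ HasInducedCopyG (F1G n) (SimpleGraph.fromRel E) ∧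
  ¬ HasInducedCopyG (F2G n) (SimpleGraph.fromRel E)

/-- Condition (D'1): the underlying graph of `E` is
`{K*_n, K_{1,n}, F^(1)_n, F^(2)_n, F^(3)_n, F^(4)_n}`-free. -/
def CondD1' {V : Type} (n : ℕ) (E : V → V → Prop) : Prop :=
  CondD1 n E ∧
  ¬ HasInducedCopyG (F3G n) (SimpleGraph.fromRel E) ∧
  ¬ HasInducedCopyG (F4G n) (SimpleGraph.fromRel E)

/-- Condition (D2): `E` is `{D^(1)_n, D^(2)_n, D^(3)_n}`-free. -/
def CondD2 {V : Type} (n : ℕ) (E : V → V → Prop) : Prop :=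
  ¬ DigraphHasInducedCopy (D1Rel n) E ∧
  ¬ DigraphHasInducedCopy (D2Rel n) E ∧
  ¬ DigraphHasInducedCopy (D3Rel n) E

/-- Condition (D3): `r(P) ≤ n` for every induced pseudo-path `P` of `E`. -/
def CondD3 {V : Type} (n : ℕ) (E : V → V → Prop) : Prop :=
  ∀ (m : ℕ) (w : Fin m → V), IsInducedPsPath E w → turnCount E w ≤ n

/-- The Ramsey number `R(a, b)`: the least `R` such that every graph on at least `R`
vertices contains a clique of size `a` or an independent set of size `b`. -/
noncomputable def ramseyNumber (a b : ℕ) : ℕ :=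
  sInf {R | ∀ m : ℕ, R ≤ m → ∀ G : SimpleGraph (Fin m),
    (∃ s : Finset (Fin m), G.IsNClique a s) ∨ (∃ s : Finset (Fin m), Gᶜ.IsNClique b s)}

/-- The independence number of the subgraph of `G` induced by `X`. -/
noncomputable def indepNumOn {V : Type} (G : SimpleGraph V) (X : Set V) : ℕ :=
  sSup {k | ∃ s : Finset V, ↑s ⊆ X ∧ s.card = k ∧ ∀ a ∈ s, ∀ b ∈ s, a ≠ b → ¬ G.Adj a b}

/-- The independence number `α(G)`. -/
noncomputable def indepNum {V : Type} (G : SimpleGraph V) : ℕ := indepNumOn G Set.univ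

/-- The neighborhood `N_G(X)` of a set of vertices. -/
def nbhd {V : Type} (G : SimpleGraph V) (X : Set V) : Set V :=
  {v | v ∉ X ∧ ∃ x ∈ X, G.Adj v x}

section CpHelpers
open SimpleGraph


/-- Recursive Ramsey-type bound for digraphs. -/
def Wnum : ℕ → ℕ → ℕ
  | 0, _ => 0
  | _+1, 0 => 0
  | a+1, b+1 => 2 * Wnum a (b+1) + Wnum (a+1) b + 1

lemma Wnum_succ_succ (a b : ℕ) :
    Wnum (a+1) (b+1) = 2 * Wnum a (b+1) + Wnum (a+1) b + 1 := by simp [Wnum]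

lemma dRamsey {V : Type} (E : V → V → Prop) (hE : ∀ u v, E u v → ¬ E v u) :
    ∀ (a b : ℕ) (s : Finset V), Wnum a b ≤ s.card →
      (∃ f : Fin a → V, Function.Injective f ∧ (∀ i, f i ∈ s) ∧
        ∀ i j, E (f i) (f j) ↔ i < j) ∨
      (∃ t : Finset V, t ⊆ s ∧ t.card = b ∧
        ∀ x ∈ t, ∀ y ∈ t, x ≠ y → ¬ (E x y ∨ E y x)) := by
  intro a
  induction a with
  | zero =>
    intro b s _
    exact Or.inl ⟨Fin.elim0, fun i => i.elim0, fun i => i.elim0, fun i => i.elim0⟩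
  | succ a IHa =>
    intro b
    induction b with
    | zero =>
      intro s _
      exact Or.inr ⟨∅, Finset.empty_subset s, Finset.card_empty, by simp⟩
    | succ b IHb =>
      intro s hs
      classical
      rw [Wnum_succ_succ] at hs
      have hpos : 0 < s.card := by omega
      obtain ⟨v, hv⟩ := Finset.card_pos.mp hpos
      set O := (s.erase v).filter (fun u => E v u) with hO_def
      set I := (s.erase v).filter (fun u => E u v) with hI_def
      set N := (s.erase v).filter (fun u => ¬ E v u ∧ ¬ E u v) with hN_def
      have hOs : O ⊆ s := (Finset.filter_subset _ _).trans (Finset.erase_subset _ _)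
      have hIs : I ⊆ s := (Finset.filter_subset _ _).trans (Finset.erase_subset _ _)
      have hNs : N ⊆ s := (Finset.filter_subset _ _).trans (Finset.erase_subset _ _)
      have hcover : s.erase v ⊆ O ∪ I ∪ N := by
        intro u hu
        by_cases h1 : E v u
        · exact Finset.mem_union_left _ (Finset.mem_union_left _ (Finset.mem_filter.mpr ⟨hu, h1⟩))
        by_cases h2 : E u v
        · exact Finset.mem_union_left _ (Finset.mem_union_right _ (Finset.mem_filter.mpr ⟨hu, h2⟩))
        · exact Finset.mem_union_right _ (Finset.mem_filter.mpr ⟨hu, h1, h2⟩)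
      have hsum : s.card - 1 ≤ O.card + I.card + N.card := by
        have h1 : (s.erase v).card = s.card - 1 := Finset.card_erase_of_mem hv
        have h2 : (s.erase v).card ≤ (O ∪ I ∪ N).card := Finset.card_le_card hcover
        have h3 : (O ∪ I ∪ N).card ≤ O.card + I.card + N.card :=
          (Finset.card_union_le _ _).trans (by gcongr; exact Finset.card_union_le _ _)
        omega
      have hcase : Wnum a (b+1) ≤ O.card ∨ Wnum a (b+1) ≤ I.card ∨ Wnum (a+1) b ≤ N.card := by
        omega
      rcases hcase with hO | hI | hN
      · rcases IHa (b+1) O hO with ⟨f, finj, fmem, farc⟩ | ⟨t, hts, htc, hind⟩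
        · left
          refine ⟨Fin.cases v f, ?_, ?_, ?_⟩
          · have hvne : ∀ k, v ≠ f k := fun k h => by
              have := Finset.mem_filter.mp (fmem k)
              exact (Finset.ne_of_mem_erase this.1) h.symm
            intro i j h
            induction i using Fin.cases with
            | zero =>
              induction j using Fin.cases with
              | zero => rfl
              | succ j => simp only [Fin.cases_zero, Fin.cases_succ] at h; exact absurd h (hvne j)
            | succ i =>
              induction j using Fin.cases with
              | zero => simp only [Fin.cases_zero, Fin.cases_succ] at h
                        exact absurd h.symm (hvne i)
              | succ j => simp only [Fin.cases_succ] at h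
                          exact congrArg Fin.succ (finj h)
          · intro i
            induction i using Fin.cases with
            | zero => simpa using hv
            | succ i => simpa using hOs (fmem i)
          · intro i j
            induction i using Fin.cases with
            | zero =>
              induction j using Fin.cases with
              | zero => simp only [Fin.cases_zero]
                        exact ⟨fun h => absurd h (hE v v h), fun h => absurd h (lt_irrefl _)⟩
              | succ j =>
                simp only [Fin.cases_zero, Fin.cases_succ]
                have : E v (f j) := (Finset.mem_filter.mp (fmem j)).2
                exact ⟨fun _ => Fin.succ_pos j, fun _ => this⟩
            | succ i =>
              induction j using Fin.cases with
              | zero =>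
                simp only [Fin.cases_zero, Fin.cases_succ]
                have : E v (f i) := (Finset.mem_filter.mp (fmem i)).2
                constructor
                · intro h; exact absurd this (hE _ _ h)
                · intro h; exact absurd h (Fin.not_lt_zero _)
              | succ j =>
                simp only [Fin.cases_succ]
                rw [farc i j, Fin.succ_lt_succ_iff]
        · exact Or.inr ⟨t, hts.trans hOs, htc, hind⟩
      · rcases IHa (b+1) I hI with ⟨f, finj, fmem, farc⟩ | ⟨t, hts, htc, hind⟩
        · left
          refine ⟨Fin.lastCases v f, ?_, ?_, ?_⟩
          · have hvne : ∀ k, v ≠ f k := fun k h => by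
              have := Finset.mem_filter.mp (fmem k)
              exact (Finset.ne_of_mem_erase this.1) h.symm
            intro i j h
            induction i using Fin.lastCases with
            | last =>
              induction j using Fin.lastCases with
              | last => rfl
              | cast j => simp only [Fin.lastCases_last, Fin.lastCases_castSucc] at h
                          exact absurd h (hvne j)
            | cast i =>
              induction j using Fin.lastCases with
              | last => simp only [Fin.lastCases_last, Fin.lastCases_castSucc] at h
                        exact absurd h.symm (hvne i)
              | cast j => simp only [Fin.lastCases_castSucc] at h
                          exact congrArg Fin.castSucc (finj h)
          · intro i
            induction i using Fin.lastCases with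
            | last => simpa using hv
            | cast i => simpa using hIs (fmem i)
          · intro i j
            induction i using Fin.lastCases with
            | last =>
              induction j using Fin.lastCases with
              | last => simp only [Fin.lastCases_last]
                        exact ⟨fun h => absurd h (hE v v h), fun h => absurd h (lt_irrefl _)⟩
              | cast j =>
                simp only [Fin.lastCases_last, Fin.lastCases_castSucc]
                have : E (f j) v := (Finset.mem_filter.mp (fmem j)).2
                constructor
                · intro h; exact absurd this (hE _ _ h)
                · intro h; exact absurd ((Fin.castSucc_lt_last j).trans h) (lt_irrefl _)
            | cast i =>
              induction j using Fin.lastCases with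
              | last =>
                simp only [Fin.lastCases_last, Fin.lastCases_castSucc]
                have : E (f i) v := (Finset.mem_filter.mp (fmem i)).2
                exact ⟨fun _ => Fin.castSucc_lt_last i, fun _ => this⟩
              | cast j =>
                simp only [Fin.lastCases_castSucc]
                rw [farc i j, Fin.castSucc_lt_castSucc_iff]
        · exact Or.inr ⟨t, hts.trans hIs, htc, hind⟩
      · rcases IHb N hN with ⟨f, finj, fmem, farc⟩ | ⟨t, hts, htc, hind⟩
        · exact Or.inl ⟨f, finj, fun i => hNs (fmem i), farc⟩
        · right
          have hvN : v ∉ t := fun h => Finset.notMem_erase v s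
            ((Finset.filter_subset _ _) (hts h))
          refine ⟨insert v t, ?_, ?_, ?_⟩
          · intro x hx
            rcases Finset.mem_insert.mp hx with rfl | hx
            · exact hv
            · exact hNs (hts hx)
          · rw [Finset.card_insert_of_notMem hvN, htc]
          · intro x hx y hy hxy
            have key : ∀ z ∈ t, ¬ (E v z ∨ E z v) := by
              intro z hz
              have := (Finset.mem_filter.mp (hts hz)).2
              rintro (h | h)
              · exact this.1 h
              · exact this.2 h
            rcases Finset.mem_insert.mp hx with hx' | hx
            · rcases Finset.mem_insert.mp hy with hy' | hy
              · exact absurd (hx'.trans hy'.symm) hxy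
              · rw [hx']; exact key y hy
            · rcases Finset.mem_insert.mp hy with hy' | hy
              · rw [hy']
                have := key x hx
                rintro (h | h)
                · exact this (Or.inr h)
                · exact this (Or.inl h)
              · exact hind x hx y hy hxy



lemma walk_prefix {V : Type} {G : SimpleGraph V} {u v : V} (p : G.Walk u v) :
    ∀ i : ℕ, ∃ q : G.Walk u (p.getVert i), q.length ≤ i := by
  induction p with
  | nil =>
    intro i
    exact ⟨Walk.nil.copy rfl (Walk.getVert_of_length_le _ (Nat.zero_le i)).symm, by simp⟩
  | cons h q IH =>
    intro i
    cases i with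
    | zero => exact ⟨Walk.nil.copy rfl (Walk.getVert_zero _).symm, by simp⟩
    | succ i =>
      obtain ⟨r, hr⟩ := IH i
      exact ⟨(r.cons h).copy rfl (Walk.getVert_cons_succ _ _).symm, by simpa using hr⟩

lemma walk_suffix {V : Type} {G : SimpleGraph V} {u v : V} (p : G.Walk u v) :
    ∀ i : ℕ, ∃ q : G.Walk (p.getVert i) v, q.length ≤ p.length - i := by
  induction p with
  | nil =>
    intro i
    exact ⟨Walk.nil.copy (Walk.getVert_of_length_le _ (Nat.zero_le i)).symm rfl, by simp⟩
  | cons h q IH =>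
    intro i
    cases i with
    | zero =>
      exact ⟨(Walk.cons h q).copy (Walk.getVert_zero _).symm rfl, by simp⟩
    | succ i =>
      obtain ⟨r, hr⟩ := IH i
      refine ⟨r.copy (Walk.getVert_cons_succ _ _).symm rfl, ?_⟩
      simp only [Walk.length_copy, Walk.length_cons]
      omega

lemma dist_getVert_prefix {V : Type} {G : SimpleGraph V} {u v : V} (p : G.Walk u v) (i : ℕ) :
    G.dist u (p.getVert i) ≤ i := by
  obtain ⟨q, hq⟩ := walk_prefix p i
  exact (SimpleGraph.dist_le q).trans hq

lemma dist_getVert_suffix {V : Type} {G : SimpleGraph V} {u v : V} (p : G.Walk u v) (i : ℕ) :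
    G.dist (p.getVert i) v ≤ p.length - i := by
  obtain ⟨q, hq⟩ := walk_suffix p i
  exact (SimpleGraph.dist_le q).trans hq

lemma dist_getVert_eq {V : Type} {G : SimpleGraph V} (hconn : G.Connected) {u v : V}
    (p : G.Walk u v) (hp : p.length = G.dist u v) {i : ℕ} (hi : i ≤ p.length) :
    G.dist u (p.getVert i) = i := by
  have h1 := dist_getVert_prefix p i
  have h2 := dist_getVert_suffix p i
  have h3 := hconn.dist_triangle (u := u) (v := p.getVert i) (w := v)
  omega

lemma not_adj_getVert {V : Type} {G : SimpleGraph V} (hconn : G.Connected) {u v : V}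
    (p : G.Walk u v) (hp : p.length = G.dist u v) {i j : ℕ} (hij : i + 2 ≤ j)
    (hj : j ≤ p.length) : ¬ G.Adj (p.getVert i) (p.getVert j) := by
  intro hadj
  have h1 := dist_getVert_prefix p i
  have h2 := dist_getVert_suffix p j
  have h3 : G.dist (p.getVert i) (p.getVert j) ≤ 1 :=
    SimpleGraph.dist_le (Walk.cons hadj Walk.nil)
  have h4 := hconn.dist_triangle (u := u) (v := p.getVert i) (w := v)
  have h5 := hconn.dist_triangle (u := p.getVert i) (v := p.getVert j) (w := v)
  omega

lemma dist_le_of_pathFree {V : Type} {G : SimpleGraph V} (hconn : G.Connected) {n : ℕ}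
    (hn : 2 ≤ n) (hP : ¬ HasInducedCopyG (PathG n) G) (u v : V) : G.dist u v ≤ n - 2 := by
  by_contra hc
  push_neg at hc
  have hL : n - 1 ≤ G.dist u v := by omega
  obtain ⟨p, _, hlen⟩ := hconn.exists_path_of_dist u v
  have hlen' : n - 1 ≤ p.length := by omega
  refine hP ⟨fun i : Fin n => p.getVert i.val, ?_, ?_⟩
  · intro i j h
    have h1 : G.dist u (p.getVert i.val) = i.val :=
      dist_getVert_eq hconn p hlen (by omega)
    have h2 : G.dist u (p.getVert j.val) = j.val :=
      dist_getVert_eq hconn p hlen (by omega)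
    apply Fin.ext
    rw [← h1, ← h2]
    exact congrArg (G.dist u) h
  · intro i j
    have hiL : i.val ≤ p.length := by omega
    have hjL : j.val ≤ p.length := by omega
    have hne : i ≠ j → ((PathG n).Adj i j ↔ (i.val + 1 = j.val ∨ j.val + 1 = i.val)) := by
      intro hij
      simp [PathG, SimpleGraph.fromRel_adj, hij]
    constructor
    · intro hadj
      have hij : i ≠ j := by
        rintro rfl; exact G.irrefl hadj
      rw [hne hij]
      by_contra hno
      push_neg at hno
      have hvij : i.val ≠ j.val := fun h => hij (Fin.ext h)
      rcases Nat.lt_or_ge i.val j.val with h | h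
      · exact not_adj_getVert hconn p hlen (by omega) hjL hadj
      · have : j.val < i.val := by omega
        exact not_adj_getVert hconn p hlen (by omega) hiL hadj.symm
    · intro hadj
      have hij : i ≠ j := hadj.ne
      rw [hne hij] at hadj
      rcases hadj with h | h
      · have := p.adj_getVert_succ (i := i.val) (by omega)
        rwa [h] at this
      · have := p.adj_getVert_succ (i := j.val) (by omega)
        rw [h] at this
        exact this.symm

lemma Wnum_pos {a b : ℕ} (ha : 1 ≤ a) (hb : 1 ≤ b) : 1 ≤ Wnum a b := by
  obtain ⟨a, rfl⟩ : ∃ a', a = a' + 1 := ⟨a - 1, by omega⟩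
  obtain ⟨b, rfl⟩ : ∃ b', b = b' + 1 := ⟨b - 1, by omega⟩
  simp [Wnum]


lemma degree_lt {V : Type} [Fintype V] [DecidableEq V] (E : V → V → Prop)
    (hE : ∀ u v, E u v → ¬ E v u) (n : ℕ)
    (hT : ¬ DigraphHasInducedCopy (TRel n) E)
    (hS : ¬ HasInducedCopyG (StarG n) (SimpleGraph.fromRel E)) (a : V) :
    ∀ (s : Finset V), (∀ u ∈ s, (SimpleGraph.fromRel E).Adj a u) → s.card < Wnum n n := by
  intro s hs
  by_contra h
  push_neg at h
  rcases dRamsey E hE n n s h with ⟨f, finj, fmem, farc⟩ | ⟨t, hts, htc, hind⟩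
  · exact hT ⟨f, finj, fun i j => farc i j⟩
  · apply hS
    classical
    let e : Fin n → V := fun i => (t.equivFin.symm (Fin.cast htc.symm i) : V)
    have hmem : ∀ i, e i ∈ t := fun i => (t.equivFin.symm (Fin.cast htc.symm i)).2
    have einj : Function.Injective e := by
      intro i j h
      have := t.equivFin.symm.injective (Subtype.ext h)
      simpa [Fin.ext_iff] using congrArg Fin.val this
    have hadj : ∀ i, (SimpleGraph.fromRel E).Adj a (e i) := fun i => hs _ (hts (hmem i))
    have hnadj : ∀ i j, i ≠ j → ¬ (SimpleGraph.fromRel E).Adj (e i) (e j) := by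
      intro i j hij hadj'
      exact hind _ (hmem i) _ (hmem j) (fun h => hij (einj h))
        ((SimpleGraph.fromRel_adj _ _ _).mp hadj').2
    refine ⟨Sum.elim (fun _ => a) e, ?_, ?_⟩
    · rintro (u1 | i) (u2 | j) h
      · cases u1; cases u2; rfl
      · exact absurd h ((hadj j).ne)
      · exact absurd h.symm ((hadj i).ne)
      · exact congrArg Sum.inr (einj h)
    · rintro (u1 | i) (u2 | j)
      · simp only [Sum.elim_inl]
        constructor
        · intro h; exact absurd h (SimpleGraph.irrefl _)
        · intro h
          exact absurd h (by simp [StarG, SimpleGraph.fromRel_adj])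
      · simp only [Sum.elim_inl, Sum.elim_inr]
        constructor
        · intro _; simp [StarG, SimpleGraph.fromRel_adj]
        · intro _; exact hadj j
      · simp only [Sum.elim_inl, Sum.elim_inr]
        constructor
        · intro _; simp [StarG, SimpleGraph.fromRel_adj]
        · intro _; exact (hadj i).symm
      · simp only [Sum.elim_inr]
        constructor
        · intro h
          by_cases hij : i = j
          · subst hij; exact absurd h (SimpleGraph.irrefl _)
          · exact absurd h (hnadj i j hij)
        · intro h; exact absurd h (by simp [StarG, SimpleGraph.fromRel_adj])

lemma card_ball_le {V : Type} [Fintype V] [DecidableEq V] {G : SimpleGraph V}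
    (hconn : G.Connected) (W : ℕ) (hW : 1 ≤ W)
    (hdeg : ∀ a : V, ∀ s : Finset V, (∀ u ∈ s, G.Adj a u) → s.card < W) (v0 : V) :
    ∀ r : ℕ, (Finset.univ.filter (fun u => G.dist v0 u ≤ r)).card ≤ W ^ r := by
  classical
  intro r
  induction r with
  | zero =>
    have : (Finset.univ.filter (fun u => G.dist v0 u ≤ 0)) ⊆ {v0} := by
      intro u hu
      have := (Finset.mem_filter.mp hu).2
      have : G.dist v0 u = 0 := by omega
      simp [(hconn.dist_eq_zero_iff).mp this]
    simpa using Finset.card_le_card this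
  | succ r IH =>
    set f : V → V := fun u =>
      if G.dist v0 u ≤ r then u
      else if h2 : ∃ x, G.Adj x u ∧ G.dist v0 x ≤ r then h2.choose else u with hf
    have key : (Finset.univ.filter (fun u => G.dist v0 u ≤ r + 1)).card ≤
        W * (Finset.univ.filter (fun u => G.dist v0 u ≤ r)).card := by
      apply Finset.card_le_mul_card_image_of_maps_to (f := f)
      · intro u hu
        have hu' := (Finset.mem_filter.mp hu).2
        by_cases h : G.dist v0 u ≤ r
        · simp only [hf, if_pos h]
          exact Finset.mem_filter.mpr ⟨Finset.mem_univ _, h⟩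
        · have h2 : ∃ x, G.Adj x u ∧ G.dist v0 x ≤ r := by
            obtain ⟨p, _, hlen⟩ := hconn.exists_path_of_dist v0 u
            have hd : G.dist v0 u = r + 1 := by omega
            have hrlen : r < p.length := by omega
            have hadj := p.adj_getVert_succ hrlen
            have hend : p.getVert (r + 1) = u := by
              rw [show r + 1 = p.length by omega]
              exact p.getVert_length
            rw [hend] at hadj
            exact ⟨p.getVert r, hadj, dist_getVert_prefix p r⟩
          simp only [hf, if_neg h, dif_pos h2]
          exact Finset.mem_filter.mpr ⟨Finset.mem_univ _, h2.choose_spec.2⟩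
      · intro x _
        have hsub : (Finset.univ.filter (fun u => G.dist v0 u ≤ r + 1)).filter
            (fun u => f u = x) ⊆ insert x (Finset.univ.filter (fun u => G.Adj x u)) := by
          intro u hu
          have hfu := (Finset.mem_filter.mp hu).2
          by_cases h : G.dist v0 u ≤ r
          · rw [hf] at hfu; simp only [if_pos h] at hfu
            exact hfu ▸ Finset.mem_insert_self _ _
          · by_cases h2 : ∃ x, G.Adj x u ∧ G.dist v0 x ≤ r
            · rw [hf] at hfu; simp only [if_neg h, dif_pos h2] at hfu
              have := h2.choose_spec.1
              rw [hfu] at this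
              exact Finset.mem_insert_of_mem
                (Finset.mem_filter.mpr ⟨Finset.mem_univ _, this⟩)
            · rw [hf] at hfu; simp only [if_neg h, dif_neg h2] at hfu
              exact hfu ▸ Finset.mem_insert_self _ _
        have h1 := Finset.card_le_card hsub
        have h2 := Finset.card_insert_le x (Finset.univ.filter (fun u => G.Adj x u))
        have h3 := hdeg x (Finset.univ.filter (fun u => G.Adj x u))
          (fun u hu => (Finset.mem_filter.mp hu).2)
        omega
    calc (Finset.univ.filter (fun u => G.dist v0 u ≤ r + 1)).card
        ≤ W * (Finset.univ.filter (fun u => G.dist v0 u ≤ r)).card := key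
      _ ≤ W * W ^ r := Nat.mul_le_mul_left W IH
      _ = W ^ (r + 1) := (pow_succ W r).symm ▸ (mul_comm W (W ^ r))

lemma card_le_of_smallDiam {V : Type} [Fintype V] [DecidableEq V] {G : SimpleGraph V}
    (hconn : G.Connected) (W : ℕ) (hW : 1 ≤ W)
    (hdeg : ∀ a : V, ∀ s : Finset V, (∀ u ∈ s, G.Adj a u) → s.card < W)
    (k : ℕ) (hdiam : ∀ u v : V, G.dist u v ≤ k) :
    Fintype.card V ≤ W ^ k := by
  classical
  cases isEmpty_or_nonempty V with
  | inl h => simp [Fintype.card_eq_zero]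
  | inr h =>
    obtain ⟨v0⟩ := h
    have := card_ball_le hconn W hW hdeg v0 k
    have huniv : (Finset.univ : Finset V) = Finset.univ.filter (fun u => G.dist v0 u ≤ k) := by
      ext u; simp [hdiam v0 u]
    rwa [← Finset.card_univ, huniv]

lemma cpNum_le_card {V : Type} [Fintype V] (E : V → V → Prop) :
    cpNum E ≤ Fintype.card V := by
  classical
  apply Nat.sInf_le
  have hinj : Function.Injective (fun v : V => ([v] : List V)) := by
    intro a b h; simpa using h
  refine ⟨Finset.univ.image (fun v => ([v] : List V)), ?_, ?_, ?_, ?_⟩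
  · rw [Finset.card_image_of_injective _ hinj, Finset.card_univ]
  · intro l hl
    obtain ⟨v, _, rfl⟩ := Finset.mem_image.mp hl
    exact Or.inr ⟨by simp, by simp, by simp, List.isChain_singleton _⟩
  · intro v
    exact ⟨[v], Finset.mem_image_of_mem _ (Finset.mem_univ v), by simp⟩
  · intro l hl l' hl' hne v hv hv'
    obtain ⟨a, _, rfl⟩ := Finset.mem_image.mp hl
    obtain ⟨b, _, rfl⟩ := Finset.mem_image.mp hl'
    simp only [List.mem_singleton] at hv hv'
    exact hne (by rw [← hv, hv'])

end CpHelpers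

/-- For every `n ≥ 2` there is a constant `c₁ = c₁(n)` such that
`cp(D) ≤ c₁` for every weakly connected `T_n`-free digraph `D` whose underlying graph
is `{K_{1,n}, P_n}`-free. -/
theorem cp_bounded_of_Tn_free (n : ℕ) (hn : 2 ≤ n) :
    ∃ c : ℕ, ∀ (V : Type) (_ : Fintype V) (E : V → V → Prop),
      (∀ u v : V, E u v → ¬ E v u) →
      (SimpleGraph.fromRel E).Connected →
      ¬ DigraphHasInducedCopy (TRel n) E →
      ¬ HasInducedCopyG (StarG n) (SimpleGraph.fromRel E) →
      ¬ HasInducedCopyG (PathG n) (SimpleGraph.fromRel E) →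
      cpNum E ≤ c := by
  refine ⟨Wnum n n ^ n, ?_⟩
  intro V hV E hE hconn hT hS hP
  haveI := hV
  haveI := Classical.decEq V
  have hW1 : 1 ≤ Wnum n n := Wnum_pos (by omega) (by omega)
  have hdeg : ∀ a : V, ∀ s : Finset V,
      (∀ u ∈ s, (SimpleGraph.fromRel E).Adj a u) → s.card < Wnum n n :=
    fun a => degree_lt E hE n hT hS a
  have hdiam : ∀ u v : V, (SimpleGraph.fromRel E).dist u v ≤ n - 2 :=
    dist_le_of_pathFree hconn hn hP
  have hcard : Fintype.card V ≤ Wnum n n ^ (n - 2) :=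
    card_le_of_smallDiam hconn _ hW1 hdeg (n - 2) hdiam
  have hpow : Wnum n n ^ (n - 2) ≤ Wnum n n ^ n := Nat.pow_le_pow_right hW1 (by omega)
  have hcp := cpNum_le_card E
  omega
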